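/- Uniform ratio bound under strong mixing: assume (B1). Then for all n ∈ ℕ, z_{0:n−1} ∈ Z^n, every m with 1 ≤ m ≤ n−1, and every x ∈ X, δ_x Q⟨z_{m:n−1}⟩1_X / η⟨z_{0:m−1}⟩Q⟨z_{m:n−1}⟩1_X ≤ (δ̄ ε̄) / (δ̲ ε̲). -/

import Mathlib

noncomputable section

section FeynmanKac
open MeasureTheory ProbabilityTheory

variable {X Z : Type*} [MeasurableSpace X] [MeasurableSpace Z]

/-- The unnormalised Feynman-Kac operator `Q⟨z_{k:k+len-1}⟩` acting on functions:
`Q⟨z_{k:m}⟩h(x) = g_{z_k}(x) ∫ Q⟨z_{k+1:m}⟩h(y) M(x,dy)`, the identity when `len = 0`. -/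
def Qop (M : Kernel X X) (g : Z → X → ℝ) (z : ℕ → Z) (k len : ℕ) (h : X → ℝ) : X → ℝ :=
  (List.range len).foldr (fun i acc x => g (z (k + i)) x * ∫ y, acc y ∂(M x)) h

/-- `γ⟨z_{0:n-1}⟩h = χQ⟨z_{0:n-1}⟩h`. -/
def gammaFK (χ : Measure X) (M : Kernel X X) (g : Z → X → ℝ) (z : ℕ → Z)
    (n : ℕ) (h : X → ℝ) : ℝ :=
  ∫ x, Qop M g z 0 n h x ∂χ

/-- The predictor functional `η⟨z_{0:n-1}⟩h = χQ⟨z_{0:n-1}⟩h / χQ⟨z_{0:n-1}⟩1`. -/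
def etaFK (χ : Measure X) (M : Kernel X X) (g : Z → X → ℝ) (z : ℕ → Z)
    (n : ℕ) (h : X → ℝ) : ℝ :=
  gammaFK χ M g z n h / gammaFK χ M g z n (fun _ => 1)

/-- The truncated asymptotic variance
`σ²_ℓ⟨z_{0:n-1}⟩(h) = Σ_{m=ℓ}^n η⟨z_{0:m-1}⟩({Q⟨z_{m:n-1}⟩(h - η⟨z_{0:n-1}⟩h)}²)
  / (η⟨z_{0:m-1}⟩Q⟨z_{m:n-1}⟩1)²`. -/
def sigmaSq (χ : Measure X) (M : Kernel X X) (g : Z → X → ℝ) (z : ℕ → Z)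
    (ℓ n : ℕ) (h : X → ℝ) : ℝ :=
  ∑ m ∈ Finset.Icc ℓ n,
    etaFK χ M g z m
        (fun x => (Qop M g z m (n - m) (fun y => h y - etaFK χ M g z n h) x) ^ 2)
      / (etaFK χ M g z m (Qop M g z m (n - m) (fun _ => 1))) ^ 2

/-- Sup norm `‖h‖_∞` of a (bounded) function. -/
def supn {Y : Type*} (h : Y → ℝ) : ℝ := sSup (Set.range fun x => |h x|)

end FeynmanKac


section Helpers
open MeasureTheory ProbabilityTheory
variable {X Z : Type*} [MeasurableSpace X] [MeasurableSpace Z]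

section lems
variable (M : Kernel X X) (g : Z → X → ℝ) (z : ℕ → Z)

lemma Qop_zero (k : ℕ) (h : X → ℝ) : Qop M g z k 0 h = h := rfl

lemma Qop_succ_right (k len : ℕ) (h : X → ℝ) :
    Qop M g z k (len + 1) h
      = Qop M g z k len (fun x => g (z (k + len)) x * ∫ y, h y ∂(M x)) := by
  unfold Qop
  rw [List.range_succ, List.foldr_append]
  rfl

lemma Qop_succ_left (k len : ℕ) (h : X → ℝ) :
    Qop M g z k (len + 1) h
      = fun x => g (z k) x * ∫ y, Qop M g z (k + 1) len h y ∂(M x) := by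
  induction len generalizing h with
  | zero =>
      unfold Qop
      simp [List.range_succ]
  | succ len ih =>
      rw [Qop_succ_right, ih, Qop_succ_right]
      rw [show k + (len + 1) = (k + 1) + len by omega]

lemma aux_meas_int (M : Kernel X X) [IsMarkovKernel M] {h : X → ℝ} (hh : Measurable h) :
    Measurable fun x => ∫ y, h y ∂(M x) :=
  (MeasureTheory.StronglyMeasurable.integral_kernel_prod_right (κ := M)
    (f := fun _ y => h y) (hh.comp measurable_snd).stronglyMeasurable).measurable

lemma aux_integrable (ν : Measure X) [IsProbabilityMeasure ν] {f : X → ℝ} (hf : Measurable f)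
    {C : ℝ} (h0 : ∀ x, 0 ≤ f x) (hC : ∀ x, f x ≤ C) : Integrable f ν := by
  refine Integrable.mono' (integrable_const C) hf.aestronglyMeasurable ?_
  filter_upwards with x
  rw [Real.norm_eq_abs, abs_of_nonneg (h0 x)]; exact hC x

variable [IsMarkovKernel M] {δhi : ℝ} (hδhi : 0 ≤ δhi)
  (hgmeas : ∀ zz, Measurable (g zz)) (hgnn : ∀ zz x, 0 ≤ g zz x)
  (hgup : ∀ zz x, g zz x ≤ δhi)

include hδhi hgmeas hgnn hgup in
lemma Qop_meas_bdd {h : X → ℝ} {C : ℝ} (hh : Measurable h)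
    (h0 : ∀ x, 0 ≤ h x) (hC : ∀ x, h x ≤ C) (len : ℕ) : ∀ k,
    Measurable (Qop M g z k len h) ∧ (∀ x, 0 ≤ Qop M g z k len h x) ∧
      (∀ x, Qop M g z k len h x ≤ δhi ^ len * C) := by
  induction len with
  | zero => intro k; rw [Qop_zero]; exact ⟨hh, h0, by simpa using hC⟩
  | succ len ih =>
      intro k
      obtain ⟨ihm, ih0, ihC⟩ := ih (k + 1)
      rw [Qop_succ_left]
      have hint : ∀ x, 0 ≤ ∫ y, Qop M g z (k+1) len h y ∂(M x) :=
        fun x => integral_nonneg ih0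
      have hintC : ∀ x, (∫ y, Qop M g z (k+1) len h y ∂(M x)) ≤ δhi ^ len * C := by
        intro x
        calc (∫ y, Qop M g z (k+1) len h y ∂(M x))
            ≤ ∫ _, δhi ^ len * C ∂(M x) :=
              integral_mono (aux_integrable _ ihm ih0 ihC) (integrable_const _) ihC
          _ = δhi ^ len * C := by simp
      refine ⟨(hgmeas _).mul (aux_meas_int M ihm), fun x => mul_nonneg (hgnn _ _) (hint x),
        fun x => ?_⟩
      calc g (z k) x * ∫ y, Qop M g z (k+1) len h y ∂(M x)
          ≤ δhi * ∫ y, Qop M g z (k+1) len h y ∂(M x) :=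
            mul_le_mul_of_nonneg_right (hgup _ _) (hint x)
        _ ≤ δhi * (δhi ^ len * C) := mul_le_mul_of_nonneg_left (hintC x) hδhi
        _ = δhi ^ (len+1) * C := by ring


include hδhi hgmeas hgnn hgup in
lemma Qop_mono {h₁ h₂ : X → ℝ} {C₁ C₂ : ℝ} (hh₁ : Measurable h₁) (h01 : ∀ x, 0 ≤ h₁ x)
    (hC1 : ∀ x, h₁ x ≤ C₁) (hh₂ : Measurable h₂) (h02 : ∀ x, 0 ≤ h₂ x) (hC2 : ∀ x, h₂ x ≤ C₂)
    (h12 : ∀ x, h₁ x ≤ h₂ x) (len : ℕ) : ∀ k x,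
    Qop M g z k len h₁ x ≤ Qop M g z k len h₂ x := by
  induction len with
  | zero => intro k x; rw [Qop_zero, Qop_zero]; exact h12 x
  | succ len ih =>
      intro k x
      rw [Qop_succ_left, Qop_succ_left]
      obtain ⟨m1, l1, u1⟩ := Qop_meas_bdd M g z hδhi hgmeas hgnn hgup hh₁ h01 hC1 len (k+1)
      obtain ⟨m2, l2, u2⟩ := Qop_meas_bdd M g z hδhi hgmeas hgnn hgup hh₂ h02 hC2 len (k+1)
      exact mul_le_mul_of_nonneg_left
        (integral_mono (aux_integrable _ m1 l1 u1) (aux_integrable _ m2 l2 u2) (ih (k+1)))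
        (hgnn _ _)

omit [IsMarkovKernel M] in
lemma Qop_const_mul (c : ℝ) (h : X → ℝ) (len : ℕ) : ∀ k,
    Qop M g z k len (fun x => c * h x) = fun x => c * Qop M g z k len h x := by
  induction len with
  | zero => intro k; rw [Qop_zero, Qop_zero]
  | succ len ih =>
      intro k
      rw [Qop_succ_left, Qop_succ_left, ih (k+1)]
      funext x
      rw [integral_const_mul _ _]
      ring

include hδhi hgmeas hgnn hgup in
lemma int_Qop_one_ge {δlo : ℝ} (hδlo : 0 ≤ δlo) (hglo : ∀ zz x, δlo ≤ ∫ y, g zz y ∂(M x))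
    (len : ℕ) : ∀ k x, δlo ^ len ≤ ∫ y, Qop M g z k len (fun _ => (1:ℝ)) y ∂(M x) := by
  induction len with
  | zero => intro k x; rw [Qop_zero]; simp
  | succ len ih =>
      intro k x
      obtain ⟨mQ, lQ, uQ⟩ := Qop_meas_bdd M g z hδhi hgmeas hgnn hgup measurable_const
        (fun _ => zero_le_one) (fun _ => le_refl 1) (len+1) k
      calc δlo ^ (len + 1) = δlo ^ len * δlo := by ring
        _ ≤ ∫ y, δlo ^ len * g (z k) y ∂(M x) := by
            rw [integral_const_mul _ _]
            exact mul_le_mul_of_nonneg_left (hglo _ _) (pow_nonneg hδlo len)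
        _ ≤ ∫ y, Qop M g z k (len+1) (fun _ => (1:ℝ)) y ∂(M x) := by
            refine integral_mono (aux_integrable _ ((hgmeas _).const_mul _)
              (fun y => mul_nonneg (pow_nonneg hδlo len) (hgnn _ _))
              (fun y => mul_le_mul_of_nonneg_left (hgup _ _) (pow_nonneg hδlo len)))
              (aux_integrable _ mQ lQ uQ) ?_
            intro y
            rw [Qop_succ_left]
            calc δlo ^ len * g (z k) y = g (z k) y * δlo ^ len := by ring
              _ ≤ g (z k) y * ∫ w, Qop M g z (k+1) len (fun _ => (1:ℝ)) w ∂(M y) :=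
                  mul_le_mul_of_nonneg_left (ih (k+1) y) (hgnn _ _)

end lems

section mix
open MeasureTheory
variable {X : Type*} [MeasurableSpace X] (M : Kernel X X) [IsMarkovKernel M]
  (μ : Measure X) [IsProbabilityMeasure μ] {εlo εhi : ℝ} (hεlo : 0 ≤ εlo) (hεhi : 0 ≤ εhi)
  (hmix : ∀ (x : X) (A : Set X), MeasurableSet A →
      ENNReal.ofReal εlo * μ A ≤ M x A ∧ M x A ≤ ENNReal.ofReal εhi * μ A)
  {f : X → ℝ} {C : ℝ} (hf : Measurable f) (h0 : ∀ x, 0 ≤ f x) (hC : ∀ x, f x ≤ C)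

include hεhi hmix h0 hC hf in
lemma int_le_mix (x : X) : ∫ y, f y ∂(M x) ≤ εhi * ∫ y, f y ∂μ := by
  rw [integral_eq_lintegral_of_nonneg_ae (Filter.Eventually.of_forall h0) hf.aestronglyMeasurable,
    integral_eq_lintegral_of_nonneg_ae (Filter.Eventually.of_forall h0) hf.aestronglyMeasurable]
  have hfin : ∫⁻ a, ENNReal.ofReal (f a) ∂μ ≤ ENNReal.ofReal C := by
    calc ∫⁻ a, ENNReal.ofReal (f a) ∂μ ≤ ∫⁻ _, ENNReal.ofReal C ∂μ :=
        lintegral_mono fun a => ENNReal.ofReal_le_ofReal (hC a)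
      _ = ENNReal.ofReal C := by simp
  have key : ∫⁻ a, ENNReal.ofReal (f a) ∂(M x)
      ≤ ENNReal.ofReal εhi * ∫⁻ a, ENNReal.ofReal (f a) ∂μ := by
    rw [← smul_eq_mul, ← lintegral_smul_measure]
    refine lintegral_mono' (Measure.le_iff.2 fun A hA => ?_) le_rfl
    simpa [Measure.smul_apply, smul_eq_mul] using (hmix x A hA).2
  calc (∫⁻ a, ENNReal.ofReal (f a) ∂(M x)).toReal
      ≤ (ENNReal.ofReal εhi * ∫⁻ a, ENNReal.ofReal (f a) ∂μ).toReal := by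
        refine ENNReal.toReal_mono (ENNReal.mul_ne_top ENNReal.ofReal_ne_top ?_) key
        exact (lt_of_le_of_lt hfin ENNReal.ofReal_lt_top).ne
    _ = εhi * (∫⁻ a, ENNReal.ofReal (f a) ∂μ).toReal := by
        rw [ENNReal.toReal_mul, ENNReal.toReal_ofReal hεhi]

include hεlo hmix h0 hC hf in
lemma int_ge_mix (x : X) : εlo * ∫ y, f y ∂μ ≤ ∫ y, f y ∂(M x) := by
  rw [integral_eq_lintegral_of_nonneg_ae (Filter.Eventually.of_forall h0) hf.aestronglyMeasurable,
    integral_eq_lintegral_of_nonneg_ae (Filter.Eventually.of_forall h0) hf.aestronglyMeasurable]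
  have hfin : ∫⁻ a, ENNReal.ofReal (f a) ∂(M x) ≤ ENNReal.ofReal C := by
    calc ∫⁻ a, ENNReal.ofReal (f a) ∂(M x) ≤ ∫⁻ _, ENNReal.ofReal C ∂(M x) :=
        lintegral_mono fun a => ENNReal.ofReal_le_ofReal (hC a)
      _ = ENNReal.ofReal C := by simp
  have key : ENNReal.ofReal εlo * ∫⁻ a, ENNReal.ofReal (f a) ∂μ
      ≤ ∫⁻ a, ENNReal.ofReal (f a) ∂(M x) := by
    rw [← smul_eq_mul, ← lintegral_smul_measure]
    refine lintegral_mono' (Measure.le_iff.2 fun A hA => ?_) le_rfl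
    simpa [Measure.smul_apply, smul_eq_mul] using (hmix x A hA).1
  calc εlo * (∫⁻ a, ENNReal.ofReal (f a) ∂μ).toReal
      = (ENNReal.ofReal εlo * ∫⁻ a, ENNReal.ofReal (f a) ∂μ).toReal := by
        rw [ENNReal.toReal_mul, ENNReal.toReal_ofReal hεlo]
    _ ≤ (∫⁻ a, ENNReal.ofReal (f a) ∂(M x)).toReal :=
        ENNReal.toReal_mono (lt_of_le_of_lt hfin ENNReal.ofReal_lt_top).ne key

end mix
end Helpers

section Thm
open MeasureTheory ProbabilityTheory

variable {X Z : Type*} [MeasurableSpace X] [MeasurableSpace Z]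

/-- **Uniform ratio bound under the strong mixing assumption (B1)**: if
`ε̲ μ(A) ≤ M(x,A) ≤ ε̄ μ(A)`, `‖g_z‖_∞ ≤ δ̄` and `Mg_z(x) ≥ δ̲`, then for all `n`, `z_{0:n-1}`,
all `1 ≤ m ≤ n-1`, and all `x`,
`δ_x Q⟨z_{m:n-1}⟩1 / η⟨z_{0:m-1}⟩Q⟨z_{m:n-1}⟩1 ≤ (δ̄ε̄)/(δ̲ε̲)`. -/
theorem ratio_bound_strong_mixing
    (M : Kernel X X) [IsMarkovKernel M] (χ : Measure X) [IsProbabilityMeasure χ]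
    (g : Z → X → ℝ) (hgmeas : ∀ zz, Measurable (g zz)) (hgpos : ∀ zz x, 0 < g zz x)
    (εlo εhi : ℝ) (hε0 : 0 < εlo) (hεlh : εlo < εhi)
    (μ : Measure X) [IsProbabilityMeasure μ]
    (hmix : ∀ (x : X) (A : Set X), MeasurableSet A →
      ENNReal.ofReal εlo * μ A ≤ M x A ∧ M x A ≤ ENNReal.ofReal εhi * μ A)
    (δlo δhi : ℝ) (hδ0 : 0 < δlo) (hδlh : δlo < δhi)
    (hgup : ∀ zz x, g zz x ≤ δhi)
    (hglo : ∀ zz x, δlo ≤ ∫ y, g zz y ∂(M x))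
    (z : ℕ → Z) (n m : ℕ) (hm1 : 1 ≤ m) (hmn : m < n) (x : X) :
    Qop M g z m (n - m) (fun _ => 1) x
        / etaFK χ M g z m (Qop M g z m (n - m) (fun _ => 1))
      ≤ (δhi * εhi) / (δlo * εlo) := by
  classical
  have hεhi : (0:ℝ) < εhi := hε0.trans hεlh
  have hδhi : (0:ℝ) < δhi := hδ0.trans hδlh
  have hgnn : ∀ zz x, 0 ≤ g zz x := fun zz x => (hgpos zz x).le
  obtain ⟨L, hL⟩ : ∃ L, n - m = L + 1 := ⟨n - m - 1, by omega⟩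
  obtain ⟨m', hm'⟩ : ∃ m', m = m' + 1 := ⟨m - 1, by omega⟩
  set Q : X → ℝ := Qop M g z m (n - m) (fun _ => 1) with hQdef
  obtain ⟨hQmeas, hQnn, hQbd⟩ := Qop_meas_bdd M g z hδhi.le hgmeas hgnn hgup
    (measurable_const (a := (1:ℝ))) (fun _ => zero_le_one) (fun _ => le_refl 1) (n - m) m
  set CQ : ℝ := δhi ^ (n - m) * 1 with hCQdef
  set R : X → ℝ := Qop M g z (m+1) L (fun _ => 1) with hRdef
  obtain ⟨hRmeas, hRnn, hRbd⟩ := Qop_meas_bdd M g z hδhi.le hgmeas hgnn hgup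
    (measurable_const (a := (1:ℝ))) (fun _ => zero_le_one) (fun _ => le_refl 1) L (m+1)
  set μR : ℝ := ∫ y, R y ∂μ with hμRdef
  have hμRnn : 0 ≤ μR := integral_nonneg hRnn
  have hQeq : Q = fun w => g (z m) w * ∫ y, R y ∂(M w) := by
    rw [hQdef, hL, Qop_succ_left]
  have hintR_le : ∀ w, (∫ y, R y ∂(M w)) ≤ εhi * μR := fun w =>
    int_le_mix M μ hεhi.le hmix hRmeas hRnn hRbd w
  have hintR_ge : ∀ w, εlo * μR ≤ ∫ y, R y ∂(M w) := fun w =>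
    int_ge_mix M μ hε0.le hmix hRmeas hRnn hRbd w
  have hQup : ∀ w, Q w ≤ δhi * (εhi * μR) := by
    intro w; rw [hQeq]
    calc g (z m) w * ∫ y, R y ∂(M w) ≤ δhi * ∫ y, R y ∂(M w) :=
        mul_le_mul_of_nonneg_right (hgup _ _) (integral_nonneg hRnn)
      _ ≤ δhi * (εhi * μR) := mul_le_mul_of_nonneg_left (hintR_le w) hδhi.le
  have hMQ_lo : ∀ w, δlo * (εlo * μR) ≤ ∫ y, Q y ∂(M w) := by
    intro w
    have h1 : ∀ y, (εlo * μR) * g (z m) y ≤ Q y := by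
      intro y; rw [hQeq]
      calc (εlo * μR) * g (z m) y = g (z m) y * (εlo * μR) := by ring
        _ ≤ g (z m) y * ∫ r, R r ∂(M y) :=
            mul_le_mul_of_nonneg_left (hintR_ge y) (hgnn _ _)
    calc δlo * (εlo * μR) = (εlo * μR) * δlo := by ring
      _ ≤ (εlo * μR) * ∫ y, g (z m) y ∂(M w) :=
          mul_le_mul_of_nonneg_left (hglo _ _) (mul_nonneg hε0.le hμRnn)
      _ = ∫ y, (εlo * μR) * g (z m) y ∂(M w) := (integral_const_mul _ _).symm
      _ ≤ ∫ y, Q y ∂(M w) := by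
          refine integral_mono (aux_integrable _ ((hgmeas _).const_mul _)
            (fun y => mul_nonneg (mul_nonneg hε0.le hμRnn) (hgnn _ _))
            (fun y => mul_le_mul_of_nonneg_left (hgup _ _) (mul_nonneg hε0.le hμRnn)))
            (aux_integrable _ hQmeas hQnn hQbd) h1
  have hQx_pos : 0 < Q x := by
    rw [hQeq]
    refine mul_pos (hgpos _ _) (lt_of_lt_of_le (pow_pos hδ0 L) ?_)
    exact int_Qop_one_ge M g z hδhi.le hgmeas hgnn hgup hδ0.le hglo L (m+1) x
  set c : ℝ := (δlo * εlo) / (δhi * εhi) * Q x with hcdef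
  have hratpos : 0 < (δlo * εlo) / (δhi * εhi) :=
    div_pos (mul_pos hδ0 hε0) (mul_pos hδhi hεhi)
  have hc_pos : 0 < c := mul_pos hratpos hQx_pos
  have hc_le_MQ : ∀ w, c ≤ ∫ y, Q y ∂(M w) := by
    intro w
    calc c ≤ (δlo * εlo) / (δhi * εhi) * (δhi * (εhi * μR)) :=
        mul_le_mul_of_nonneg_left (hQup x) hratpos.le
      _ = δlo * (εlo * μR) := by field_simp
      _ ≤ ∫ y, Q y ∂(M w) := hMQ_lo w
  -- measurability of MQ
  have hMQmeas : Measurable fun w => ∫ y, Q y ∂(M w) := aux_meas_int M hQmeas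
  have hMQnn : ∀ w, 0 ≤ ∫ y, Q y ∂(M w) := fun w => integral_nonneg hQnn
  have hMQbd : ∀ w, (∫ y, Q y ∂(M w)) ≤ CQ := by
    intro w
    calc (∫ y, Q y ∂(M w)) ≤ ∫ _, CQ ∂(M w) :=
        integral_mono (aux_integrable _ hQmeas hQnn hQbd) (integrable_const _) hQbd
      _ = CQ := by simp
  -- the two Qop 0 m functions
  obtain ⟨hP1meas, hP1nn, hP1bd⟩ := Qop_meas_bdd M g z hδhi.le hgmeas hgnn hgup
    (measurable_const (a := (1:ℝ))) (fun _ => zero_le_one) (fun _ => le_refl 1) m 0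
  obtain ⟨hPQmeas, hPQnn, hPQbd⟩ := Qop_meas_bdd M g z hδhi.le hgmeas hgnn hgup
    hQmeas hQnn hQbd m 0
  have hP1 : Qop M g z 0 m (fun _ => (1:ℝ))
      = Qop M g z 0 m' (fun w => g (z (0 + m')) w * 1) := by
    rw [hm', Qop_succ_right]
    congr 1; funext w; simp
  have hPQ : Qop M g z 0 m Q
      = Qop M g z 0 m' (fun w => g (z (0 + m')) w * ∫ y, Q y ∂(M w)) := by
    rw [hm', Qop_succ_right]
  have hkey : ∀ w', c * Qop M g z 0 m (fun _ => (1:ℝ)) w' ≤ Qop M g z 0 m Q w' := by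
    intro w'
    rw [hP1, hPQ]
    refine le_trans (le_of_eq
      (congrFun (Qop_const_mul M g z c (fun w => g (z (0 + m')) w * 1) m' 0) w').symm) ?_
    refine Qop_mono M g z hδhi.le hgmeas hgnn hgup
      (C₁ := c * δhi) (C₂ := δhi * CQ)
      (((hgmeas _).mul measurable_const).const_mul c)
      (fun w => mul_nonneg hc_pos.le (by simpa using hgnn (z (0 + m')) w))
      (fun w => by
        simpa using mul_le_mul_of_nonneg_left (hgup (z (0 + m')) w) hc_pos.le)
      ((hgmeas _).mul hMQmeas)
      (fun w => mul_nonneg (hgnn _ _) (hMQnn w))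
      (fun w => mul_le_mul (hgup _ _) (hMQbd w) (hMQnn w) hδhi.le)
      (fun w => by
        have : c * (g (z (0 + m')) w * 1) = g (z (0 + m')) w * c := by ring
        show c * (g (z (0 + m')) w * 1) ≤ g (z (0 + m')) w * ∫ y, Q y ∂(M w)
        rw [this]
        exact mul_le_mul_of_nonneg_left (hc_le_MQ w) (hgnn _ _)) m' 0 w'
  -- gamma bounds
  have hγ1pos : 0 < gammaFK χ M g z m (fun _ => 1) := by
    rw [gammaFK]
    rw [integral_pos_iff_support_of_nonneg_ae (Filter.Eventually.of_forall hP1nn)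
      (aux_integrable _ hP1meas hP1nn hP1bd)]
    have hsupp : Function.support (Qop M g z 0 m (fun _ => (1:ℝ))) = Set.univ := by
      refine Set.eq_univ_of_forall fun w => ?_
      have : 0 < Qop M g z 0 m (fun _ => (1:ℝ)) w := by
        rw [hm', Qop_succ_left]
        refine mul_pos (hgpos _ _) (lt_of_lt_of_le (pow_pos hδ0 m') ?_)
        exact int_Qop_one_ge M g z hδhi.le hgmeas hgnn hgup hδ0.le hglo m' 1 w
      exact Function.mem_support.2 this.ne'
    rw [hsupp]
    simp
  have hγQ : c * gammaFK χ M g z m (fun _ => 1) ≤ gammaFK χ M g z m Q := by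
    rw [gammaFK, gammaFK, ← integral_const_mul]
    refine integral_mono (Integrable.const_mul (aux_integrable _ hP1meas hP1nn hP1bd) c)
      (aux_integrable _ hPQmeas hPQnn hPQbd) hkey
  have hη : c ≤ etaFK χ M g z m Q := by
    rw [etaFK, le_div_iff₀ hγ1pos]
    exact hγQ
  have hη_pos : 0 < etaFK χ M g z m Q := lt_of_lt_of_le hc_pos hη
  calc Q x / etaFK χ M g z m Q ≤ Q x / c :=
      div_le_div_of_nonneg_left hQx_pos.le hc_pos hη
    _ = (δhi * εhi) / (δlo * εlo) := by
        rw [hcdef]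
        field_simp


end Thm
end
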